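/- Let μ be a boundedly finite Borel measure on E = [0,∞)² ∖ {(0,0)} that is homogeneous of degree −1, let ‖·‖ be a norm on ℝ² with ‖(1,0)‖ = 1 = ‖(0,1)‖, let Φ be the spectral measure of μ with respect to ‖·‖, and let Λ = ι_*μ be the pushforward of μ under ι(z₁,z₂) = (1/z₁, 1/z₂) (with 1/0 = ∞). Then for every u ∈ (0,∞): Λ({∞}×(0,u]) = u·Φ({0}) and Λ((0,u]×{∞}) = u·Φ({π/2}). -/

import Mathlib

open MeasureTheory Set Real Filter Topology
open scoped ENNReal Pointwise

noncomputable section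

/-- The cone `E = [0,∞)² \ {(0,0)}` as a subset of `ℝ²`. -/
def Econe : Set (ℝ × ℝ) := (Ici 0 ×ˢ Ici 0) \ {((0 : ℝ), (0 : ℝ))}

/-- The angular coordinate `θ(z) = arctan (z₁ / z₂)`, with `θ(z) = π/2` when `z₂ = 0`. -/
def ang (z : ℝ × ℝ) : ℝ := if z.2 = 0 then π / 2 else Real.arctan (z.1 / z.2)

/-- The coordinatewise inversion `ι(z₁,z₂) = (1/z₁, 1/z₂)`, with values in `[0,∞]²`
and the convention `1/0 = ∞`. -/
def iota (z : ℝ × ℝ) : ℝ≥0∞ × ℝ≥0∞ := ((ENNReal.ofReal z.1)⁻¹, (ENNReal.ofReal z.2)⁻¹)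

theorem stmt8 (μ : Measure (ℝ × ℝ)) (hμE : μ Econeᶜ = 0)
    (hbf : ∀ ε > (0 : ℝ), μ {z | z ∈ Econe ∧ ε ≤ max z.1 z.2} < ⊤)
    (hhom : ∀ B : Set (ℝ × ℝ), B ⊆ Econe → MeasurableSet B → ∀ c > (0 : ℝ),
      μ (c • B) = ENNReal.ofReal c⁻¹ * μ B)
    (Nn : ℝ × ℝ → ℝ)
    (hN_add : ∀ z w, Nn (z + w) ≤ Nn z + Nn w)
    (hN_smul : ∀ (c : ℝ) (z), Nn (c • z) = |c| * Nn z)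
    (hN_zero : ∀ z, Nn z = 0 ↔ z = 0)
    (hN10 : Nn (1, 0) = 1) (hN01 : Nn (0, 1) = 1)
    (Φ : Measure ℝ)
    (hΦ : ∀ B : Set ℝ, MeasurableSet B →
      Φ B = μ {z | z ∈ Econe ∧ 1 ≤ Nn z ∧ ang z ∈ B})
    (Λ : Measure (ℝ≥0∞ × ℝ≥0∞)) (hΛ : Λ = μ.map iota) :
    ∀ u > (0 : ℝ),
      Λ ({⊤} ×ˢ Ioc 0 (ENNReal.ofReal u)) = ENNReal.ofReal u * Φ {0} ∧
      Λ (Ioc 0 (ENNReal.ofReal u) ×ˢ {⊤}) = ENNReal.ofReal u * Φ {π / 2} := by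
  intro u hu
  have hmι : Measurable iota := by
    exact ((ENNReal.measurable_ofReal.comp measurable_fst).inv).prodMk
      ((ENNReal.measurable_ofReal.comp measurable_snd).inv)
  -- μ A = μ (A ∩ Econe)
  have key : ∀ A : Set (ℝ × ℝ), μ A = μ (A ∩ Econe) := by
    intro A
    refine le_antisymm ?_ (measure_mono inter_subset_left)
    calc μ A ≤ μ (A ∩ Econe) + μ (A \ Econe) := measure_le_inter_add_diff μ A Econe
    _ ≤ μ (A ∩ Econe) + μ Econeᶜ := by
        gcongr; exact fun z hz => hz.2
    _ = μ (A ∩ Econe) := by rw [hμE, add_zero]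
  -- norm values along the axes
  have hN0t : ∀ t : ℝ, 0 ≤ t → Nn (0, t) = t := by
    intro t ht
    have : ((0 : ℝ), t) = t • ((0 : ℝ), (1 : ℝ)) := by
      simp [Prod.smul_def, smul_eq_mul]
    rw [this, hN_smul, hN01, mul_one, abs_of_nonneg ht]
  have hNt0 : ∀ t : ℝ, 0 ≤ t → Nn (t, 0) = t := by
    intro t ht
    have : (t, (0 : ℝ)) = t • ((1 : ℝ), (0 : ℝ)) := by
      simp [Prod.smul_def, smul_eq_mul]
    rw [this, hN_smul, hN10, mul_one, abs_of_nonneg ht]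
  have hupos : (0 : ℝ) < u⁻¹ := by positivity
  -- the two base sets
  set B0 : Set (ℝ × ℝ) := {(0 : ℝ)} ×ˢ Ici (1 : ℝ) with hB0
  set B1 : Set (ℝ × ℝ) := Ici (1 : ℝ) ×ˢ {(0 : ℝ)} with hB1
  have hB0E : B0 ⊆ Econe := by
    rintro ⟨x, y⟩ ⟨hx, hy⟩
    simp only [mem_singleton_iff] at hx
    simp only [mem_Ici] at hy
    refine ⟨⟨mem_Ici.2 (le_of_eq hx.symm), mem_Ici.2 (by linarith)⟩, ?_⟩
    simp only [mem_singleton_iff, Prod.mk.injEq, not_and_or]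
    exact Or.inr (by intro h; linarith)
  have hB1E : B1 ⊆ Econe := by
    rintro ⟨x, y⟩ ⟨hx, hy⟩
    simp only [mem_Ici] at hx
    simp only [mem_singleton_iff] at hy
    refine ⟨⟨mem_Ici.2 (by linarith), mem_Ici.2 (le_of_eq hy.symm)⟩, ?_⟩
    simp only [mem_singleton_iff, Prod.mk.injEq, not_and_or]
    exact Or.inl (by intro h; linarith)
  have hB0m : MeasurableSet B0 := (measurableSet_singleton _).prod measurableSet_Ici
  have hB1m : MeasurableSet B1 := measurableSet_Ici.prod (measurableSet_singleton _)
  -- smul of the base sets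
  have hs0 : u⁻¹ • B0 = ({(0 : ℝ)} ×ˢ Ici u⁻¹ : Set (ℝ × ℝ)) := by
    ext z
    rw [Set.mem_smul_set_iff_inv_smul_mem₀ hupos.ne']
    simp only [hB0, mem_prod, mem_singleton_iff, mem_Ici, Prod.smul_def, smul_eq_mul, Prod.fst,
      Prod.snd, inv_inv]
    constructor
    · rintro ⟨h1, h2⟩
      constructor
      · have := mul_eq_zero.1 h1
        rcases this with h | h
        · exact absurd h hu.ne'
        · exact h
      · have huu : u * u⁻¹ = 1 := mul_inv_cancel₀ hu.ne'
        nlinarith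
    · rintro ⟨h1, h2⟩
      refine ⟨by rw [h1, mul_zero], ?_⟩
      calc (1 : ℝ) = u * u⁻¹ := by field_simp
      _ ≤ u * z.2 := by
          apply mul_le_mul_of_nonneg_left h2 hu.le
  have hs1 : u⁻¹ • B1 = (Ici u⁻¹ ×ˢ {(0 : ℝ)} : Set (ℝ × ℝ)) := by
    ext z
    rw [Set.mem_smul_set_iff_inv_smul_mem₀ hupos.ne']
    simp only [hB1, mem_prod, mem_singleton_iff, mem_Ici, Prod.smul_def, smul_eq_mul, inv_inv]
    constructor
    · rintro ⟨h1, h2⟩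
      constructor
      · have huu : u * u⁻¹ = 1 := mul_inv_cancel₀ hu.ne'
        nlinarith
      · have := mul_eq_zero.1 h2
        rcases this with h | h
        · exact absurd h hu.ne'
        · exact h
    · rintro ⟨h1, h2⟩
      refine ⟨?_, by rw [h2, mul_zero]⟩
      calc (1 : ℝ) = u * u⁻¹ := by field_simp
      _ ≤ u * z.1 := by
          apply mul_le_mul_of_nonneg_left h1 hu.le
  -- Φ values
  have hΦ0 : Φ {0} = μ B0 := by
    rw [hΦ {0} (measurableSet_singleton _)]
    congr 1
    ext ⟨x, y⟩
    simp only [mem_setOf_eq, mem_singleton_iff, hB0, mem_prod, mem_Ici, Econe, mem_diff,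
      Prod.mk.injEq, not_and_or]
    constructor
    · rintro ⟨⟨⟨hx, hy⟩, hne⟩, hN, hang⟩
      have hy0 : y ≠ 0 := by
        intro h
        rw [ang, if_pos h] at hang
        have := Real.pi_pos
        simp at hang
      rw [ang, if_neg hy0, Real.arctan_eq_zero_iff] at hang
      have hx0 : x = 0 := by
        rcases div_eq_zero_iff.1 hang with h | h
        · exact h
        · exact absurd h hy0
      refine ⟨hx0, ?_⟩
      rw [hx0] at hN
      rwa [hN0t y hy] at hN
    · rintro ⟨hx0, hy1⟩
      subst hx0
      have hy0 : (0 : ℝ) < y := by linarith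
      refine ⟨⟨⟨le_refl 0, hy0.le⟩, Or.inr (by intro h; linarith)⟩, ?_, ?_⟩
      · rw [hN0t y hy0.le]; exact hy1
      · rw [ang, if_neg hy0.ne']
        simp [Real.arctan_eq_zero_iff, hy0.ne']
  have hΦ1 : Φ {π / 2} = μ B1 := by
    rw [hΦ {π / 2} (measurableSet_singleton _)]
    congr 1
    ext ⟨x, y⟩
    simp only [mem_setOf_eq, mem_singleton_iff, hB1, mem_prod, mem_Ici, Econe, mem_diff,
      Prod.mk.injEq, not_and_or]
    constructor
    · rintro ⟨⟨⟨hx, hy⟩, hne⟩, hN, hang⟩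
      have hy0 : y = 0 := by
        by_contra h
        rw [ang, if_neg h] at hang
        exact absurd hang (Real.arctan_lt_pi_div_two _).ne
      refine ⟨?_, hy0⟩
      rw [hy0] at hN
      rwa [hNt0 x hx] at hN
    · rintro ⟨hx1, hy0⟩
      subst hy0
      have hx0 : (0 : ℝ) < x := by linarith
      refine ⟨⟨⟨hx0.le, le_refl 0⟩, Or.inl (by intro h; linarith)⟩, ?_, ?_⟩
      · rw [hNt0 x hx0.le]; exact hx1
      · rw [ang, if_pos rfl]
  -- preimages intersected with Econe
  have hpre0 : iota ⁻¹' ({⊤} ×ˢ Ioc 0 (ENNReal.ofReal u)) ∩ Econe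
      = ({(0 : ℝ)} ×ˢ Ici u⁻¹ : Set (ℝ × ℝ)) := by
    ext ⟨x, y⟩
    simp only [mem_inter_iff, mem_preimage, iota, mem_prod, mem_singleton_iff, mem_Ioc,
      mem_Ici, Econe, mem_diff, Prod.mk.injEq, not_and_or]
    constructor
    · rintro ⟨⟨htop, _, hle⟩, ⟨hx, hy⟩, hne⟩
      have hx0 : x = 0 := by
        rw [ENNReal.inv_eq_top, ENNReal.ofReal_eq_zero] at htop
        linarith
      refine ⟨hx0, ?_⟩
      rw [ENNReal.inv_le_iff_inv_le, ← ENNReal.ofReal_inv_of_pos hu,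
        ENNReal.ofReal_le_ofReal_iff hy] at hle
      exact hle
    · rintro ⟨hx0, hy⟩
      have hy0 : (0 : ℝ) < y := lt_of_lt_of_le hupos hy
      subst hx0
      refine ⟨⟨?_, ?_, ?_⟩, ⟨le_refl 0, hy0.le⟩, Or.inr (by intro h; linarith)⟩
      · rw [ENNReal.inv_eq_top, ENNReal.ofReal_eq_zero]
      · rw [ENNReal.inv_pos]; exact ENNReal.ofReal_ne_top
      · rw [ENNReal.inv_le_iff_inv_le, ← ENNReal.ofReal_inv_of_pos hu,
          ENNReal.ofReal_le_ofReal_iff hy0.le]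
        exact hy
  have hpre1 : iota ⁻¹' (Ioc 0 (ENNReal.ofReal u) ×ˢ {⊤}) ∩ Econe
      = (Ici u⁻¹ ×ˢ {(0 : ℝ)} : Set (ℝ × ℝ)) := by
    ext ⟨x, y⟩
    simp only [mem_inter_iff, mem_preimage, iota, mem_prod, mem_singleton_iff, mem_Ioc,
      mem_Ici, Econe, mem_diff, Prod.mk.injEq, not_and_or]
    constructor
    · rintro ⟨⟨⟨_, hle⟩, htop⟩, ⟨hx, hy⟩, hne⟩
      have hy0 : y = 0 := by
        rw [ENNReal.inv_eq_top, ENNReal.ofReal_eq_zero] at htop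
        linarith
      refine ⟨?_, hy0⟩
      rw [ENNReal.inv_le_iff_inv_le, ← ENNReal.ofReal_inv_of_pos hu,
        ENNReal.ofReal_le_ofReal_iff hx] at hle
      exact hle
    · rintro ⟨hx, hy0⟩
      have hx0 : (0 : ℝ) < x := lt_of_lt_of_le hupos hx
      subst hy0
      refine ⟨⟨⟨?_, ?_⟩, ?_⟩, ⟨hx0.le, le_refl 0⟩, Or.inl (by intro h; linarith)⟩
      · rw [ENNReal.inv_pos]; exact ENNReal.ofReal_ne_top
      · rw [ENNReal.inv_le_iff_inv_le, ← ENNReal.ofReal_inv_of_pos hu,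
          ENNReal.ofReal_le_ofReal_iff hx0.le]
        exact hx
      · rw [ENNReal.inv_eq_top, ENNReal.ofReal_eq_zero]
  have hmT0 : MeasurableSet ({⊤} ×ˢ Ioc 0 (ENNReal.ofReal u) : Set (ℝ≥0∞ × ℝ≥0∞)) :=
    (measurableSet_singleton _).prod measurableSet_Ioc
  have hmT1 : MeasurableSet (Ioc 0 (ENNReal.ofReal u) ×ˢ {⊤} : Set (ℝ≥0∞ × ℝ≥0∞)) :=
    measurableSet_Ioc.prod (measurableSet_singleton _)
  have hhom0 := hhom B0 hB0E hB0m u⁻¹ hupos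
  have hhom1 := hhom B1 hB1E hB1m u⁻¹ hupos
  rw [inv_inv] at hhom0 hhom1
  constructor
  · rw [hΛ, Measure.map_apply hmι hmT0, key, hpre0, ← hs0, hhom0, hΦ0]
  · rw [hΛ, Measure.map_apply hmι hmT1, key, hpre1, ← hs1, hhom1, hΦ1]
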